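/- Under the balanced within-stratum design, the absolute difference between the overall difference-in-means estimator and the inverse-probability-weighting estimator is bounded by (1/π̂_inf − 1) times the stratum-size-weighted average of the absolute stratum-level effects: |τ̂_DIM − τ̂_IPW| ≤ (1/π̂_inf − 1) · Σ_{x ∈ 𝒳, n_x > 0} (n_x / n) · |τ̂_HTE(x)|, where π̂_inf = min_{x ∈ 𝒳} π̂(x). -/

import Mathlib

open Finset

noncomputable section

variable {N : ℕ} {𝒳 : Type*} [Fintype 𝒳] [DecidableEq 𝒳]

/-- Number of sampled units in stratum `x`: `n_x = #{i : S_i = 1, X_i = x}`. -/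
def nStratum (X : Fin N → 𝒳) (S : Fin N → Bool) (x : 𝒳) : ℕ :=
  (univ.filter fun i => S i = true ∧ X i = x).card

/-- Total number of sampled units: `n = #{i : S_i = 1}`. -/
def nSample (S : Fin N → Bool) : ℕ :=
  (univ.filter fun i => S i = true).card

/-- Stratum-level difference-in-means estimator `τ̂_HTE(x)`. -/
def tauHTE (X : Fin N → 𝒳) (S W : Fin N → Bool) (Y1 Y0 : Fin N → ℝ) (x : 𝒳) : ℝ :=
  (2 / (nStratum X S x : ℝ)) *
      ∑ i ∈ univ.filter (fun i => S i = true ∧ X i = x ∧ W i = true), Y1 i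
    - (2 / (nStratum X S x : ℝ)) *
      ∑ i ∈ univ.filter (fun i => S i = true ∧ X i = x ∧ W i = false), Y0 i

/-- Overall difference-in-means estimator `τ̂_DIM`. -/
def tauDIM (S W : Fin N → Bool) (Y1 Y0 : Fin N → ℝ) : ℝ :=
  (1 / ((univ.filter fun i => S i = true ∧ W i = true).card : ℝ)) *
      ∑ i ∈ univ.filter (fun i => S i = true ∧ W i = true), Y1 i
    - (1 / ((univ.filter fun i => S i = true ∧ W i = false).card : ℝ)) *
      ∑ i ∈ univ.filter (fun i => S i = true ∧ W i = false), Y0 i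

/-- Inverse-probability-weighting estimator `τ̂_IPW` with weight function `π̂`. -/
def tauIPW (X : Fin N → 𝒳) (S W : Fin N → Bool) (Y1 Y0 : Fin N → ℝ) (piHat : 𝒳 → ℝ) : ℝ :=
  (1 / ((univ.filter fun i => S i = true ∧ W i = true).card : ℝ)) *
      ∑ i ∈ univ.filter (fun i => S i = true ∧ W i = true), Y1 i / piHat (X i)
    - (1 / ((univ.filter fun i => S i = true ∧ W i = false).card : ℝ)) *
      ∑ i ∈ univ.filter (fun i => S i = true ∧ W i = false), Y0 i / piHat (X i)

/-- Balanced within-stratum design: in every nonempty stratum, the number of sampled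
treated units equals the number of sampled control units, and both are positive. -/
def BalancedDesign (X : Fin N → 𝒳) (S W : Fin N → Bool) : Prop :=
  ∀ x : 𝒳, 0 < nStratum X S x →
    (univ.filter fun i => S i = true ∧ X i = x ∧ W i = true).card =
        (univ.filter fun i => S i = true ∧ X i = x ∧ W i = false).card ∧
    0 < (univ.filter fun i => S i = true ∧ X i = x ∧ W i = true).card

set_option maxHeartbeats 1000000 in
/-- Under the balanced within-stratum design, the absolute difference between the overall
difference-in-means estimator and the inverse-probability-weighting estimator is bounded
by `(1/π̂_inf − 1)` times the stratum-size-weighted average of the absolute stratum-level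
effects, where `π̂_inf = min_{x ∈ 𝒳} π̂(x)`. -/
theorem abs_tauDIM_sub_tauIPW_le
    [Nonempty 𝒳]
    (X : Fin N → 𝒳) (S W : Fin N → Bool) (Y1 Y0 : Fin N → ℝ) (piHat : 𝒳 → ℝ)
    (hpi : ∀ x, 0 < piHat x ∧ piHat x ≤ 1)
    (hn : 0 < nSample S) (hbal : BalancedDesign X S W) :
    |tauDIM S W Y1 Y0 - tauIPW X S W Y1 Y0 piHat| ≤
      (1 / (univ.inf' univ_nonempty piHat) - 1) *
        ∑ x ∈ univ.filter (fun x => 0 < nStratum X S x),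
          ((nStratum X S x : ℝ) / (nSample S : ℝ)) * |tauHTE X S W Y1 Y0 x| := by
  classical
  have hπpos : 0 < univ.inf' univ_nonempty piHat := by
    obtain ⟨x, -, hx⟩ := Finset.exists_mem_eq_inf' univ_nonempty piHat
    rw [hx]; exact (hpi x).1
  have hπle : ∀ x, univ.inf' univ_nonempty piHat ≤ piHat x :=
    fun x => Finset.inf'_le _ (mem_univ x)
  set πinf := univ.inf' univ_nonempty piHat with hπinf
  set T := univ.filter (fun i : Fin N => S i = true ∧ W i = true) with hTdef
  set C := univ.filter (fun i : Fin N => S i = true ∧ W i = false) with hCdef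
  set A := fun x : 𝒳 => univ.filter (fun i : Fin N => S i = true ∧ X i = x ∧ W i = true)
    with hAdef
  set B := fun x : 𝒳 => univ.filter (fun i : Fin N => S i = true ∧ X i = x ∧ W i = false)
    with hBdef
  have hA : ∀ x, T.filter (fun i => X i = x) = A x := by
    intro x
    rw [hTdef, hAdef, Finset.filter_filter]
    apply Finset.filter_congr
    intro i _; constructor <;> (intro h; tauto)
  have hC' : ∀ x, C.filter (fun i => X i = x) = B x := by
    intro x
    rw [hCdef, hBdef, Finset.filter_filter]
    apply Finset.filter_congr
    intro i _; constructor <;> (intro h; tauto)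
  have hAX : ∀ x, ∀ i ∈ A x, X i = x := by
    intro x i hi; rw [hAdef] at hi; simp at hi; tauto
  have hBX : ∀ x, ∀ i ∈ B x, X i = x := by
    intro x i hi; rw [hBdef] at hi; simp at hi; tauto
  -- cards
  have hTcard : T.card = ∑ x : 𝒳, (A x).card := by
    rw [Finset.card_eq_sum_card_fiberwise (f := X) (t := univ) (fun i _ => mem_univ (X i))]
    exact Finset.sum_congr rfl fun x _ => by rw [hA]
  have hCcard : C.card = ∑ x : 𝒳, (B x).card := by
    rw [Finset.card_eq_sum_card_fiberwise (f := X) (t := univ) (fun i _ => mem_univ (X i))]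
    exact Finset.sum_congr rfl fun x _ => by rw [hC']
  have hstr : ∀ x, (A x).card + (B x).card = nStratum X S x := by
    intro x
    have h1 : (univ.filter fun i : Fin N => S i = true ∧ X i = x).filter
        (fun i => W i = true) = A x := by
      ext i; simp only [hAdef, Finset.mem_filter, Finset.mem_univ, true_and]; tauto
    have h2 : (univ.filter fun i : Fin N => S i = true ∧ X i = x).filter
        (fun i => ¬ W i = true) = B x := by
      ext i
      simp only [hBdef, Finset.mem_filter, Finset.mem_univ, true_and, Bool.not_eq_true]
      tauto
    rw [nStratum, ← Finset.card_filter_add_card_filter_not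
      (s := univ.filter fun i => S i = true ∧ X i = x) (p := fun i => W i = true), h1, h2]
  have hnsum : nSample S = ∑ x : 𝒳, nStratum X S x := by
    rw [nSample, Finset.card_eq_sum_card_fiberwise (f := X) (t := univ)
      (fun i _ => mem_univ (X i))]
    apply Finset.sum_congr rfl
    intro x _
    rw [nStratum, Finset.filter_filter]
  have hABzero : ∀ x, nStratum X S x = 0 → (A x).card = 0 ∧ (B x).card = 0 := by
    intro x hx
    have := hstr x
    omega
  have hABcard : ∀ x, (A x).card = (B x).card := by
    intro x
    rcases Nat.eq_zero_or_pos (nStratum X S x) with h | h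
    · obtain ⟨h1, h2⟩ := hABzero x h; rw [h1, h2]
    · exact (hbal x h).1
  have hTC : T.card = C.card := by
    rw [hTcard, hCcard]; exact Finset.sum_congr rfl fun x _ => hABcard x
  have hn2 : nSample S = 2 * T.card := by
    rw [hnsum, hTcard, Finset.mul_sum]
    apply Finset.sum_congr rfl
    intro x _
    rw [← hstr x, hABcard x, two_mul]
  have hm : 0 < T.card := by omega
  have hmR : (0 : ℝ) < (T.card : ℝ) := by exact_mod_cast hm
  have hnR : ((nSample S : ℝ)) = 2 * (T.card : ℝ) := by exact_mod_cast hn2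
  -- fiberwise sums
  have hfibT : ∀ f : Fin N → ℝ, ∑ i ∈ T, f i = ∑ x : 𝒳, ∑ i ∈ A x, f i := by
    intro f
    rw [← Finset.sum_fiberwise T X f]
    exact Finset.sum_congr rfl fun x _ => by rw [hA]
  have hfibC : ∀ f : Fin N → ℝ, ∑ i ∈ C, f i = ∑ x : 𝒳, ∑ i ∈ B x, f i := by
    intro f
    rw [← Finset.sum_fiberwise C X f]
    exact Finset.sum_congr rfl fun x _ => by rw [hC']
  -- the key decomposition
  set g := fun x : 𝒳 => (1 - 1 / piHat x) * ((∑ i ∈ A x, Y1 i) - ∑ i ∈ B x, Y0 i)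
    with hgdef
  have hD : tauDIM S W Y1 Y0 - tauIPW X S W Y1 Y0 piHat
      = (1 / (T.card : ℝ)) * ∑ x : 𝒳, g x := by
    unfold tauDIM tauIPW
    rw [← hTdef, ← hCdef, ← hTC]
    have e1 : ∑ i ∈ T, Y1 i * (1 - 1 / piHat (X i))
        = (∑ i ∈ T, Y1 i) - ∑ i ∈ T, Y1 i / piHat (X i) := by
      rw [← Finset.sum_sub_distrib]
      exact Finset.sum_congr rfl fun i _ => by ring
    have e2 : ∑ i ∈ C, Y0 i * (1 - 1 / piHat (X i))
        = (∑ i ∈ C, Y0 i) - ∑ i ∈ C, Y0 i / piHat (X i) := by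
      rw [← Finset.sum_sub_distrib]
      exact Finset.sum_congr rfl fun i _ => by ring
    have e3 : ∑ x : 𝒳, g x
        = (∑ i ∈ T, Y1 i * (1 - 1 / piHat (X i)))
          - ∑ i ∈ C, Y0 i * (1 - 1 / piHat (X i)) := by
      rw [hfibT, hfibC, ← Finset.sum_sub_distrib]
      apply Finset.sum_congr rfl
      intro x _
      rw [hgdef]
      have eA : ∑ i ∈ A x, Y1 i * (1 - 1 / piHat (X i))
          = (1 - 1 / piHat x) * ∑ i ∈ A x, Y1 i := by
        rw [Finset.mul_sum]
        exact Finset.sum_congr rfl fun i hi => by rw [hAX x i hi]; ring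
      have eB : ∑ i ∈ B x, Y0 i * (1 - 1 / piHat (X i))
          = (1 - 1 / piHat x) * ∑ i ∈ B x, Y0 i := by
        rw [Finset.mul_sum]
        exact Finset.sum_congr rfl fun i hi => by rw [hBX x i hi]; ring
      rw [eA, eB]; ring
    rw [e3, e1, e2]; ring
  -- restrict to positive strata
  have hrestrict : ∑ x : 𝒳, g x
      = ∑ x ∈ univ.filter (fun x => 0 < nStratum X S x), g x := by
    symm
    apply Finset.sum_filter_of_ne
    intro x _ hgx
    by_contra h
    have h0 : nStratum X S x = 0 := by omega
    obtain ⟨h1, h2⟩ := hABzero x h0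
    rw [Finset.card_eq_zero] at h1 h2
    apply hgx
    rw [hgdef]
    simp [h1, h2]
  -- g on positive strata
  have hgpos : ∀ x, 0 < nStratum X S x →
      g x = (1 - 1 / piHat x) * ((nStratum X S x : ℝ) / 2 * tauHTE X S W Y1 Y0 x) := by
    intro x hx
    have hnx : ((nStratum X S x : ℝ)) ≠ 0 := by positivity
    have hAfold : (univ.filter (fun i : Fin N => S i = true ∧ X i = x ∧ W i = true)) = A x :=
      rfl
    have hBfold : (univ.filter (fun i : Fin N => S i = true ∧ X i = x ∧ W i = false)) = B x :=
      rfl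
    have hgx : g x = (1 - 1 / piHat x) * ((∑ i ∈ A x, Y1 i) - ∑ i ∈ B x, Y0 i) := rfl
    rw [hgx, tauHTE, hAfold, hBfold]
    field_simp
  rw [hD, hrestrict]
  rw [Finset.mul_sum]
  have habs : |∑ x ∈ univ.filter (fun x => 0 < nStratum X S x), (1 / (T.card : ℝ)) * g x|
      ≤ ∑ x ∈ univ.filter (fun x => 0 < nStratum X S x),
        |(1 / (T.card : ℝ)) * g x| := Finset.abs_sum_le_sum_abs _ _
  refine habs.trans ?_
  rw [Finset.mul_sum]
  apply Finset.sum_le_sum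
  intro x hx
  rw [Finset.mem_filter] at hx
  have hxpos := hx.2
  have hpx := hpi x
  have h1px : 0 ≤ 1 / piHat x - 1 := by
    rw [sub_nonneg, le_div_iff₀ hpx.1]
    simpa using hpx.2
  have habs1 : |1 - 1 / piHat x| = 1 / piHat x - 1 := by
    rw [abs_sub_comm]; exact abs_of_nonneg h1px
  have hposm : (0:ℝ) ≤ 1 / (T.card : ℝ) := by positivity
  have hposn : (0:ℝ) ≤ (nStratum X S x : ℝ) / 2 := by positivity
  have e : |1 / (T.card : ℝ) * g x|
      = 1 / (T.card : ℝ) * ((1 / piHat x - 1)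
        * ((nStratum X S x : ℝ) / 2 * |tauHTE X S W Y1 Y0 x|)) := by
    rw [hgpos x hxpos, abs_mul, abs_mul, abs_mul, habs1, abs_of_nonneg hposm,
      abs_of_nonneg hposn]
  have hcoef : 1 / (T.card : ℝ) * ((nStratum X S x : ℝ) / 2)
      = (nStratum X S x : ℝ) / (nSample S : ℝ) := by
    rw [hnR, one_div_mul_eq_div, div_div]
  have e2 : 1 / (T.card : ℝ) * ((1 / piHat x - 1)
        * ((nStratum X S x : ℝ) / 2 * |tauHTE X S W Y1 Y0 x|))
      = (1 / piHat x - 1)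
        * ((nStratum X S x : ℝ) / (nSample S : ℝ) * |tauHTE X S W Y1 Y0 x|) := by
    rw [← hcoef]; ring
  rw [e, e2]
  have hineq : 1 / piHat x - 1 ≤ 1 / πinf - 1 := by
    have h1 : 1 / piHat x ≤ 1 / πinf := one_div_le_one_div_of_le hπpos (hπle x)
    linarith
  exact mul_le_mul_of_nonneg_right hineq (by positivity)
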